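/- The conjugator length function of every split crystallographic group grows linearly. -/

import Mathlib

noncomputable section

/-- Euclidean `n`-space. -/
abbrev En (n : ℕ) : Type := EuclideanSpace ℝ (Fin n)

/-- The orthogonal group of Euclidean `n`-space, realized as linear isometries. -/
abbrev OrthGrp (n : ℕ) : Type := En n ≃ₗᵢ[ℝ] En n

/-- The action of the orthogonal group on the (multiplicatively written) translation group. -/
def rotAction (n : ℕ) : OrthGrp n →* MulAut (Multiplicative (En n)) where
  toFun A := AddEquiv.toMultiplicative A.toLinearEquiv.toAddEquiv
  map_one' := by ext x; rfl
  map_mul' A B := by ext x; rfl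

/-- The isometry group `Isom(𝔼ⁿ) = T ⋊ O(n)`. -/
abbrev IsomE (n : ℕ) : Type :=
  SemidirectProduct (Multiplicative (En n)) (OrthGrp n) (rotAction n)

instance (n : ℕ) : TopologicalSpace (OrthGrp n) :=
  TopologicalSpace.induced (fun A => (A : En n → En n)) inferInstance

instance (n : ℕ) : TopologicalSpace (IsomE n) :=
  TopologicalSpace.induced (fun g => (g.left, g.right)) inferInstance

/-- The translation subgroup `T` of `Isom(𝔼ⁿ)`. -/
def transSubgroup (n : ℕ) : Subgroup (IsomE n) := SemidirectProduct.inl.range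

/-- The orthogonal subgroup `O(n)` of `Isom(𝔼ⁿ)`. -/
def sphSubgroup (n : ℕ) : Subgroup (IsomE n) := SemidirectProduct.inr.range

/-- A subgroup `H` of `Isom(𝔼ⁿ)` *splits* if `H = T_H ⋊ H₀`:
the translation part and the spherical part of every element of `H` lie in `H`. -/
def Splits {n : ℕ} (H : Subgroup (IsomE n)) : Prop :=
  ∀ h ∈ H, SemidirectProduct.inl h.left ∈ H ∧ SemidirectProduct.inr h.right ∈ H

/-- The translation vector of an isometry. -/
def tPart {n : ℕ} (g : IsomE n) : En n := Multiplicative.toAdd g.left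

/-- The lattice `L_H = {λ : t^λ ∈ T_H}` of translation vectors of `H`. -/
def latticeLH {n : ℕ} (H : Subgroup (IsomE n)) : Set (En n) :=
  {v | SemidirectProduct.inl (Multiplicative.ofAdd v) ∈ H}

/-- Word length with respect to a generating set `S` (symmetrized). -/
def wordLength {G : Type*} [Group G] (S : Set G) (g : G) : ℕ :=
  sInf {k | ∃ l : List G, (∀ x ∈ l, x ∈ S ∨ x⁻¹ ∈ S) ∧ l.prod = g ∧ l.length = k}

/-- The conjugator length of a pair of elements. -/
def conjLength {G : Type*} [Group G] (S : Set G) (h h' : G) : ℕ :=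
  sInf {m | ∃ k : G, k * h * k⁻¹ = h' ∧ wordLength S k = m}

/-- The conjugator length function. -/
def CLF {G : Type*} [Group G] (S : Set G) (m : ℕ) : ℕ :=
  sSup {l | ∃ h h' : G, IsConj h h' ∧ wordLength S h + wordLength S h' ≤ m ∧
    conjLength S h h' = l}

/-- `g` quasi-dominates `f` via an increasing affine function. -/
def QuasiDom (f g : ℕ → ℕ) : Prop :=
  ∃ C D : ℕ, 0 < C ∧ ∀ m, f m ≤ C * g (C * m + D) + D

/-- The natural affine action of `Isom(𝔼ⁿ)` on `𝔼ⁿ`: `t^λ A • x = A x + λ`. -/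
def isomAct {n : ℕ} (g : IsomE n) (x : En n) : En n := g.right x + tPart g

/-! ### Auxiliary lemmas -/

section basic
variable {n : ℕ}

lemma tPart_mul (g h : IsomE n) : tPart (g * h) = tPart g + g.right (tPart h) := rfl

lemma tPart_inv (g : IsomE n) : tPart g⁻¹ = g.right⁻¹ (-(tPart g)) := rfl

lemma right_mul (g h : IsomE n) : (g * h).right = g.right * h.right := rfl

lemma tPart_inl (v : En n) : tPart (SemidirectProduct.inl (Multiplicative.ofAdd v)) = v := rfl

lemma norm_tPart_inv (g : IsomE n) : ‖tPart g⁻¹‖ = ‖tPart g‖ := by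
  rw [tPart_inv, LinearIsometryEquiv.norm_map, norm_neg]

lemma inl_mul_inr_left (v : En n) (B : OrthGrp n) :
    ((SemidirectProduct.inl (Multiplicative.ofAdd v) * SemidirectProduct.inr B : IsomE n)).left
      = Multiplicative.ofAdd v := by
  simp

lemma inl_mul_inr_right (v : En n) (B : OrthGrp n) :
    ((SemidirectProduct.inl (Multiplicative.ofAdd v) * SemidirectProduct.inr B : IsomE n)).right
      = B := by
  simp

lemma isom_ext {g g' : IsomE n} (h1 : tPart g = tPart g') (h2 : g.right = g'.right) :
    g = g' := by
  apply SemidirectProduct.ext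
  · exact Multiplicative.toAdd.injective h1
  · exact h2

lemma conj_iff (k h h' : IsomE n) :
    k * h * k⁻¹ = h' ↔ (tPart k + k.right (tPart h) = tPart h' + h'.right (tPart k)
      ∧ k.right * h.right = h'.right * k.right) := by
  rw [mul_inv_eq_iff_eq_mul]
  constructor
  · intro hc
    constructor
    · rw [← tPart_mul, ← tPart_mul, hc]
    · rw [← right_mul, ← right_mul, hc]
  · rintro ⟨h1, h2⟩
    apply isom_ext
    · rw [tPart_mul, tPart_mul]; exact h1
    · exact h2

end basic

section wl
variable {G : Type*} [Group G] {S : Set G}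

lemma exists_list_of_closure (hSgen : Subgroup.closure S = ⊤) (g : G) :
    ∃ l : List G, (∀ x ∈ l, x ∈ S ∨ x⁻¹ ∈ S) ∧ l.prod = g := by
  have hg : g ∈ Subgroup.closure S := hSgen ▸ Subgroup.mem_top g
  induction hg using Subgroup.closure_induction with
  | mem x hx => exact ⟨[x], by simpa using Or.inl hx, by simp⟩
  | one => exact ⟨[], by simp, by simp⟩
  | mul x y hx hy ihx ihy =>
    obtain ⟨l1, h1, p1⟩ := ihx; obtain ⟨l2, h2, p2⟩ := ihy
    refine ⟨l1 ++ l2, ?_, by simp [p1, p2]⟩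
    intro x hx
    rcases List.mem_append.1 hx with h | h
    exacts [h1 x h, h2 x h]
  | inv x hx ihx =>
    obtain ⟨l, h1, p1⟩ := ihx
    refine ⟨(l.map (fun x => x⁻¹)).reverse, ?_, by rw [← List.prod_inv_reverse, p1]⟩
    intro x hx
    simp only [List.mem_reverse, List.mem_map] at hx
    obtain ⟨y, hy, rfl⟩ := hx
    simpa [or_comm] using h1 y hy

lemma wordLength_witness (hSgen : Subgroup.closure S = ⊤) (g : G) :
    ∃ l : List G, (∀ x ∈ l, x ∈ S ∨ x⁻¹ ∈ S) ∧ l.prod = g ∧ l.length = wordLength S g := by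
  have hne : {k | ∃ l : List G, (∀ x ∈ l, x ∈ S ∨ x⁻¹ ∈ S) ∧ l.prod = g ∧ l.length = k}.Nonempty := by
    obtain ⟨l, h1, h2⟩ := exists_list_of_closure hSgen g
    exact ⟨l.length, l, h1, h2, rfl⟩
  exact Nat.sInf_mem hne

lemma wordLength_le {g : G} {l : List G} (h1 : ∀ x ∈ l, x ∈ S ∨ x⁻¹ ∈ S) (h2 : l.prod = g) :
    wordLength S g ≤ l.length :=
  Nat.sInf_le ⟨l, h1, h2, rfl⟩

lemma wordLength_mul_le (hSgen : Subgroup.closure S = ⊤) (g h : G) :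
    wordLength S (g * h) ≤ wordLength S g + wordLength S h := by
  obtain ⟨l1, a1, b1, c1⟩ := wordLength_witness hSgen g
  obtain ⟨l2, a2, b2, c2⟩ := wordLength_witness hSgen h
  have := wordLength_le (S := S) (g := g * h) (l := l1 ++ l2)
    (by intro x hx; rcases List.mem_append.1 hx with h | h; exacts [a1 x h, a2 x h])
    (by simp [b1, b2])
  simpa [c1, c2] using this

end wl

section key
variable {n : ℕ}

lemma pow_apply_succ (A : OrthGrp n) (i : ℕ) (x : En n) : (A ^ (i+1)) x = A ((A ^ i) x) := by
  rw [pow_succ']; rfl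

lemma pow_apply_succ' (A : OrthGrp n) (i : ℕ) (x : En n) : (A ^ (i+1)) x = (A ^ i) (A x) := by
  rw [pow_succ]; rfl

lemma pow_fixed {A : OrthGrp n} {x : En n} (hx : A x = x) (i : ℕ) : (A ^ i) x = x := by
  induction i with
  | zero => rfl
  | succ i ih => rw [pow_apply_succ' A i x, hx, ih]

lemma sum_shift_fixed {N : ℕ} (A : OrthGrp n) (v : En n) (hv : (A ^ N) v = v) :
    A (∑ i ∈ Finset.range N, (A ^ i) v) = ∑ i ∈ Finset.range N, (A ^ i) v := by
  rw [map_sum]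
  have h1 : ∀ i ∈ Finset.range N, A ((A ^ i) v) = (A ^ (i+1)) v := by
    intro i _; rw [pow_apply_succ]
  rw [Finset.sum_congr rfl h1]
  cases N with
  | zero => simp
  | succ N =>
    rw [Finset.sum_range_succ, Finset.sum_range_succ']
    simp only [pow_zero, LinearIsometryEquiv.coe_one, id_eq] at *
    rw [hv]

lemma key_solve {N : ℕ} (hN : 0 < N) (A : OrthGrp n) (hA : A ^ N = 1)
    (L : AddSubgroup (En n)) (hL : ∀ v ∈ L, A v ∈ L) (R : ℝ)
    (hdense : ∀ x : En n, ∃ μ ∈ L, ‖x - μ‖ ≤ R)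
    {c w : En n} (hw : w ∈ L) (heq : w - A w = c) :
    ∃ w' ∈ L, (w' - A w' = c) ∧ ‖w'‖ ≤ N * ‖c‖ + N * R := by
  have hLpow : ∀ i, ∀ v ∈ L, (A ^ i) v ∈ L := by
    intro i
    induction i with
    | zero => intro v hv; simpa using hv
    | succ i ih =>
      intro v hv
      rw [show (A^(i+1)) v = A ((A^i) v) from pow_apply_succ A i v]
      exact hL _ (ih v hv)
  set p : En n := (N:ℝ)⁻¹ • ∑ i ∈ Finset.range N, (A ^ i) w with hp
  have hNw : (A ^ N) w = w := by rw [hA]; rfl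
  have hAp : A p = p := by
    rw [hp, map_smul, sum_shift_fixed A w hNw]
  have htel : ∀ i, w - (A ^ i) w = ∑ j ∈ Finset.range i, (A ^ j) c := by
    intro i
    induction i with
    | zero => simp
    | succ i ih =>
      rw [Finset.sum_range_succ, ← ih, pow_apply_succ' A i w]
      have : (A ^ i) c = (A ^ i) w - (A ^ i) (A w) := by
        rw [← heq, map_sub]
      rw [this]; abel
  have hwin : ∀ i, i ≤ N → ‖w - (A ^ i) w‖ ≤ N * ‖c‖ := by
    intro i hi
    rw [htel i]
    calc ‖∑ j ∈ Finset.range i, (A ^ j) c‖ ≤ ∑ j ∈ Finset.range i, ‖(A ^ j) c‖ :=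
          norm_sum_le _ _
      _ = ∑ j ∈ Finset.range i, ‖c‖ := by
          refine Finset.sum_congr rfl fun j _ => ?_
          exact (A ^ j).norm_map c
      _ = i * ‖c‖ := by simp
      _ ≤ N * ‖c‖ := by
          have : (i:ℝ) ≤ N := by exact_mod_cast hi
          have := norm_nonneg c
          nlinarith
  have hwp : ‖w - p‖ ≤ N * ‖c‖ := by
    have : w - p = (N:ℝ)⁻¹ • ∑ i ∈ Finset.range N, (w - (A ^ i) w) := by
      rw [Finset.sum_sub_distrib, smul_sub, hp]
      have : (N:ℝ)⁻¹ • (∑ _i ∈ Finset.range N, w) = w := by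
        rw [Finset.sum_const, Finset.card_range, ← Nat.cast_smul_eq_nsmul ℝ, smul_smul,
          inv_mul_cancel₀ (by positivity : (N:ℝ) ≠ 0), one_smul]
      rw [this]
    rw [this, norm_smul]
    have h1 : ‖∑ i ∈ Finset.range N, (w - (A ^ i) w)‖ ≤ N * (N * ‖c‖) := by
      calc ‖∑ i ∈ Finset.range N, (w - (A ^ i) w)‖
          ≤ ∑ i ∈ Finset.range N, ‖w - (A ^ i) w‖ := norm_sum_le _ _
        _ ≤ ∑ _i ∈ Finset.range N, N * ‖c‖ :=
            Finset.sum_le_sum fun i hi => hwin i (le_of_lt (Finset.mem_range.1 hi))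
        _ = N * (N * ‖c‖) := by simp [Finset.sum_const, Finset.card_range]
    calc ‖(N:ℝ)⁻¹‖ * ‖∑ i ∈ Finset.range N, (w - (A ^ i) w)‖
        ≤ ‖(N:ℝ)⁻¹‖ * (N * (N * ‖c‖)) := by
          exact mul_le_mul_of_nonneg_left h1 (norm_nonneg _)
      _ = N * ‖c‖ := by
          rw [Real.norm_eq_abs, abs_inv, Nat.abs_cast]
          field_simp
  obtain ⟨lam, hlam, hlamnorm⟩ := hdense ((N:ℝ)⁻¹ • p)
  set μ : En n := ∑ i ∈ Finset.range N, (A ^ i) lam with hμ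
  have hμL : μ ∈ L := AddSubgroup.sum_mem L fun i _ => hLpow i lam hlam
  have hAμ : A μ = μ := by
    rw [hμ]
    exact sum_shift_fixed A lam (by rw [hA]; rfl)
  have hμp : ‖μ - p‖ ≤ N * R := by
    have hx : A ((N:ℝ)⁻¹ • p) = (N:ℝ)⁻¹ • p := by rw [map_smul, hAp]
    have hpsum : p = ∑ i ∈ Finset.range N, (A ^ i) ((N:ℝ)⁻¹ • p) := by
      have : ∀ i ∈ Finset.range N, (A ^ i) ((N:ℝ)⁻¹ • p) = (N:ℝ)⁻¹ • p := fun i _ =>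
        pow_fixed hx i
      rw [Finset.sum_congr rfl this, Finset.sum_const, Finset.card_range,
        ← Nat.cast_smul_eq_nsmul ℝ, smul_smul, mul_inv_cancel₀ (by positivity : (N:ℝ) ≠ 0), one_smul]
    calc ‖μ - p‖ = ‖∑ i ∈ Finset.range N, ((A ^ i) lam - (A ^ i) ((N:ℝ)⁻¹ • p))‖ := by
          rw [Finset.sum_sub_distrib, ← hμ, ← hpsum]
      _ ≤ ∑ i ∈ Finset.range N, ‖(A ^ i) lam - (A ^ i) ((N:ℝ)⁻¹ • p)‖ := norm_sum_le _ _
      _ = ∑ i ∈ Finset.range N, ‖lam - (N:ℝ)⁻¹ • p‖ := by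
          refine Finset.sum_congr rfl fun i _ => ?_
          rw [← map_sub, (A ^ i).norm_map]
      _ ≤ ∑ _i ∈ Finset.range N, R := Finset.sum_le_sum fun i _ => by
          rw [norm_sub_rev]; exact hlamnorm
      _ = N * R := by simp
  refine ⟨w - μ, AddSubgroup.sub_mem L hw hμL, ?_, ?_⟩
  · rw [map_sub, hAμ]
    rw [← heq]; abel
  · calc ‖w - μ‖ ≤ ‖w - p‖ + ‖p - μ‖ := by
          have : w - μ = (w - p) + (p - μ) := by abel
          rw [this]; exact norm_add_le _ _
      _ ≤ N * ‖c‖ + N * R := by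
          exact add_le_add hwp (by rw [norm_sub_rev]; exact hμp)

end key

section latt
variable {n : ℕ}

lemma rotAction_apply (A : OrthGrp n) (x : Multiplicative (En n)) :
    rotAction n A x = Multiplicative.ofAdd (A (Multiplicative.toAdd x)) := rfl

/-- The lattice of translations of `H`, as an additive subgroup. -/
def LHsub (H : Subgroup (IsomE n)) : AddSubgroup (En n) where
  carrier := {v | SemidirectProduct.inl (Multiplicative.ofAdd v) ∈ H}
  zero_mem' := by
    simpa using H.one_mem
  add_mem' := by
    intro a b ha hb
    have := H.mul_mem ha hb
    rwa [← map_mul] at this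
  neg_mem' := by
    intro a ha
    have := H.inv_mem ha
    rwa [← map_inv] at this

lemma continuous_inl' : Continuous (fun v : En n =>
    (SemidirectProduct.inl (Multiplicative.ofAdd v) : IsomE n)) := by
  apply continuous_induced_rng.2
  exact Continuous.prodMk continuous_ofAdd continuous_const

lemma discrete_LH (H : Subgroup (IsomE n)) (hdisc : DiscreteTopology ↥H) :
    DiscreteTopology ↥(LHsub H) := by
  haveI := hdisc
  have hcont : Continuous (fun v : ↥(LHsub H) =>
      (⟨SemidirectProduct.inl (Multiplicative.ofAdd v.1), v.2⟩ : ↥H)) := by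
    apply Continuous.subtype_mk
    exact continuous_inl'.comp continuous_subtype_val
  apply DiscreteTopology.of_continuous_injective hcont
  intro a b hab
  have : SemidirectProduct.inl (Multiplicative.ofAdd a.1)
      = SemidirectProduct.inl (Multiplicative.ofAdd b.1) := congrArg Subtype.val hab
  have := SemidirectProduct.inl_injective this
  exact Subtype.ext (Multiplicative.ofAdd.injective this)

lemma finite_ball_inter (L : AddSubgroup (En n)) (hd : DiscreteTopology ↥L) (r : ℝ) :
    ((L : Set (En n)) ∩ Metric.closedBall 0 r).Finite := by
  haveI := hd
  have hclosed : IsClosed (L : Set (En n)) := AddSubgroup.isClosed_of_discrete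
  have hcpt : IsCompact ((L : Set (En n)) ∩ Metric.closedBall 0 r) :=
    (isCompact_closedBall (0 : En n) r).of_isClosed_subset
      (hclosed.inter Metric.isClosed_closedBall) Set.inter_subset_right
  haveI : DiscreteTopology ((L : Set (En n)) ∩ Metric.closedBall 0 r : Set (En n)) :=
    DiscreteTopology.of_subset (inferInstance : DiscreteTopology ↥L) Set.inter_subset_left
  exact hcpt.finite (isDiscrete_iff_discreteTopology.2 ‹_›)

lemma span_top_of_dense {L : AddSubgroup (En n)} {R : ℝ}
    (hdense : ∀ x : En n, ∃ μ ∈ L, ‖x - μ‖ ≤ R) :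
    Submodule.span ℝ (L : Set (En n)) = ⊤ := by
  by_contra hne
  have : (Submodule.span ℝ (L : Set (En n)))ᗮ ≠ ⊥ := by
    intro h
    exact hne (Submodule.orthogonal_eq_bot_iff.1 h)
  obtain ⟨x₀, hx₀mem, hx₀ne⟩ := Submodule.exists_mem_ne_zero_of_ne_bot this
  have hx₀pos : (0:ℝ) < ‖x₀‖ := norm_pos_iff.2 hx₀ne
  set x : En n := ((|R| + 1) / ‖x₀‖) • x₀ with hx
  obtain ⟨μ, hμ, hμx⟩ := hdense x
  have hinner : inner ℝ (x - μ) x₀ = (|R| + 1) * ‖x₀‖ := by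
    have h1 : inner ℝ μ x₀ = (0:ℝ) := by
      have := (Submodule.mem_orthogonal (Submodule.span ℝ (L : Set (En n))) x₀).1 hx₀mem
      exact this μ (Submodule.subset_span hμ)
    rw [inner_sub_left, h1, sub_zero, hx, real_inner_smul_left, real_inner_self_eq_norm_sq]
    field_simp
  have hbound : |inner ℝ (x - μ) x₀| ≤ ‖x - μ‖ * ‖x₀‖ := abs_real_inner_le_norm _ _
  rw [hinner] at hbound
  have habs : (|R| + 1) * ‖x₀‖ ≤ ‖x - μ‖ * ‖x₀‖ := le_trans (le_abs_self _) hbound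
  have h3 : ‖x - μ‖ * ‖x₀‖ ≤ R * ‖x₀‖ := mul_le_mul_of_nonneg_right hμx (le_of_lt hx₀pos)
  nlinarith [le_abs_self R, abs_nonneg R]

lemma mem_span_ball {L : AddSubgroup (En n)} {R : ℝ} (hR : 0 ≤ R)
    (hdense : ∀ x : En n, ∃ μ ∈ L, ‖x - μ‖ ≤ R) :
    Submodule.span ℝ ((L : Set (En n)) ∩ Metric.closedBall 0 (2*R+1)) = ⊤ := by
  have hsub : (L : Set (En n)) ⊆
      Submodule.span ℝ ((L : Set (En n)) ∩ Metric.closedBall 0 (2*R+1)) := by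
    have key : ∀ k : ℕ, ∀ v ∈ L, ‖v‖ ≤ 2*R+1+k →
        v ∈ Submodule.span ℝ ((L : Set (En n)) ∩ Metric.closedBall 0 (2*R+1)) := by
      intro k
      induction k with
      | zero =>
        intro v hv hnorm
        apply Submodule.subset_span
        refine ⟨hv, ?_⟩
        rw [Metric.mem_closedBall, dist_zero_right]
        push_cast at hnorm
        linarith
      | succ k ih =>
        intro v hv hnorm
        by_cases hcase : ‖v‖ ≤ 2*R+1+k
        · exact ih v hv hcase
        push_neg at hcase
        obtain ⟨μ, hμ, hμclose⟩ := hdense ((2:ℝ)⁻¹ • v)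
        push_cast at hnorm
        have hk0 : (0:ℝ) ≤ (k:ℝ) := Nat.cast_nonneg k
        have hvpos : (0:ℝ) < ‖v‖ := by linarith
        have hhalf : ‖(2:ℝ)⁻¹ • v‖ = ‖v‖ / 2 := by
          rw [norm_smul]
          norm_num
          ring
        have hμnorm : ‖μ‖ ≤ ‖v‖/2 + R := by
          have h0 := norm_sub_norm_le μ ((2:ℝ)⁻¹ • v)
          have h2 : ‖μ - (2:ℝ)⁻¹ • v‖ = ‖(2:ℝ)⁻¹ • v - μ‖ := norm_sub_rev _ _
          linarith [hμclose, hhalf, h0, h2.le, h2.ge]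
        have hvμnorm : ‖v - μ‖ ≤ ‖v‖/2 + R := by
          have : v - μ = (2:ℝ)⁻¹ • v + ((2:ℝ)⁻¹ • v - μ) := by
            rw [← add_sub_assoc]
            congr 1
            rw [← add_smul]
            norm_num
          rw [this]
          calc ‖(2:ℝ)⁻¹ • v + ((2:ℝ)⁻¹ • v - μ)‖
              ≤ ‖(2:ℝ)⁻¹ • v‖ + ‖(2:ℝ)⁻¹ • v - μ‖ := norm_add_le _ _
            _ ≤ ‖v‖/2 + R := by
                rw [hhalf]
                linarith
        have hbound2 : ‖v‖/2 + R ≤ 2*R+1+k := by linarith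
        have h1 := ih μ hμ (le_trans hμnorm hbound2)
        have h2 := ih (v - μ) (L.sub_mem hv hμ) (le_trans hvμnorm hbound2)
        have : v = (v - μ) + μ := by abel
        rw [this]
        exact Submodule.add_mem _ h2 h1
    intro v hv
    exact key ⌈‖v‖⌉₊ v hv (by
      have := Nat.le_ceil ‖v‖
      linarith)
  have h1 := span_top_of_dense hdense
  rw [eq_top_iff, ← h1]
  exact Submodule.span_le.2 hsub

end latt

section pt
variable {n : ℕ}

/-- The point group of `H`, as a subgroup of the orthogonal group. -/
def PtSub (H : Subgroup (IsomE n)) : Subgroup (OrthGrp n) where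
  carrier := {A | SemidirectProduct.inr A ∈ H}
  one_mem' := by simpa using H.one_mem
  mul_mem' := by
    intro a b ha hb
    have := H.mul_mem ha hb
    rwa [← map_mul] at this
  inv_mem' := by
    intro a ha
    have := H.inv_mem ha
    rwa [← map_inv] at this

lemma conj_inr_inl (A : OrthGrp n) (v : En n) :
    (SemidirectProduct.inr A : IsomE n) * SemidirectProduct.inl (Multiplicative.ofAdd v) *
      (SemidirectProduct.inr A)⁻¹ = SemidirectProduct.inl (Multiplicative.ofAdd (A v)) := by
  rw [← map_inv, ← SemidirectProduct.inl_aut]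
  rfl

/-- invariance of the lattice under the point group -/
lemma lattice_inv (H : Subgroup (IsomE n)) {A : OrthGrp n} (hA : A ∈ PtSub H)
    {v : En n} (hv : SemidirectProduct.inl (Multiplicative.ofAdd v) ∈ H) :
    SemidirectProduct.inl (Multiplicative.ofAdd (A v)) ∈ H := by
  rw [← conj_inr_inl]
  exact H.mul_mem (H.mul_mem hA hv) (H.inv_mem hA)

lemma pt_finite (H : Subgroup (IsomE n)) {T : Set (En n)} (hT : T.Finite)
    (hTspan : Submodule.span ℝ T = ⊤)
    (hTinv : ∀ A ∈ PtSub H, ∀ v ∈ T, A v ∈ T) : Finite ↥(PtSub H) := by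
  haveI : Finite ↥T := hT
  have hmap : ∀ (A : ↥(PtSub H)) (t : ↥T), A.1 t.1 ∈ T := fun A t => hTinv A.1 A.2 t.1 t.2
  have hinj : Function.Injective (fun (A : ↥(PtSub H)) => fun (t : ↥T) =>
      (⟨A.1 t.1, hmap A t⟩ : ↥T)) := by
    intro A B hAB
    have heq : ∀ t ∈ T, A.1 t = B.1 t := by
      intro t ht
      have := congrFun hAB ⟨t, ht⟩
      exact congrArg Subtype.val this
    have : A.1 = B.1 := by
      have := LinearMap.ext_on (f := A.1.toLinearEquiv.toLinearMap)
        (g := B.1.toLinearEquiv.toLinearMap) hTspan heq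
      exact LinearIsometryEquiv.ext fun x => LinearMap.congr_fun this x
    exact Subtype.ext this
  exact Finite.of_injective _ hinj

lemma pt_pow_eq_one (H : Subgroup (IsomE n)) (hfin : Finite ↥(PtSub H))
    {A : OrthGrp n} (hA : A ∈ PtSub H) : A ^ (Nat.card ↥(PtSub H)) = 1 := by
  haveI := hfin
  have h1 : (⟨A, hA⟩ : ↥(PtSub H)) ^ (Nat.card ↥(PtSub H)) = 1 := pow_card_eq_one'
  calc A ^ (Nat.card ↥(PtSub H))
      = ((⟨A, hA⟩ : ↥(PtSub H)) ^ (Nat.card ↥(PtSub H)) : ↥(PtSub H)) := by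
        rw [SubgroupClass.coe_pow]
    _ = ((1 : ↥(PtSub H)) : OrthGrp n) := by rw [h1]
    _ = 1 := rfl

end pt

section chain
variable {n : ℕ}

lemma word_bound (H : Subgroup (IsomE n)) (hsplit : Splits H) (S : Set ↥H)
    (hSgen : Subgroup.closure S = ⊤) (R : ℝ) (hR : 0 ≤ R)
    (hdense : ∀ x : En n, ∃ v : En n,
      (SemidirectProduct.inl (Multiplicative.ofAdd v) ∈ H) ∧ ‖x - v‖ ≤ R)
    (b₀ : ℕ)
    (hb1 : ∀ g : ↥H, (g : IsomE n).right = 1 → ‖tPart (g : IsomE n)‖ ≤ 2*R+1 →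
      wordLength S g ≤ b₀)
    (hb2 : ∀ g : ↥H, tPart (g : IsomE n) = 0 → wordLength S g ≤ b₀) :
    ∀ h : ↥H, wordLength S h ≤ 2 * b₀ * (⌈‖tPart (h : IsomE n)‖⌉₊ + 1) := by
  have hsmall : ∀ h : ↥H, ‖tPart (h : IsomE n)‖ ≤ 2*R+1 → wordLength S h ≤ 2 * b₀ := by
    intro h hnorm
    set x₁ : ↥H := ⟨SemidirectProduct.inl (h : IsomE n).left, (hsplit _ h.2).1⟩ with hx₁
    set x₂ : ↥H := ⟨SemidirectProduct.inr (h : IsomE n).right, (hsplit _ h.2).2⟩ with hx₂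
    have hdecomp : h = x₁ * x₂ := by
      apply Subtype.ext
      exact (SemidirectProduct.inl_left_mul_inr_right (h : IsomE n)).symm
    have h1 : wordLength S x₁ ≤ b₀ := by
      apply hb1
      · rfl
      · exact hnorm
    have h2 : wordLength S x₂ ≤ b₀ := hb2 x₂ rfl
    calc wordLength S h = wordLength S (x₁ * x₂) := by rw [hdecomp]
      _ ≤ wordLength S x₁ + wordLength S x₂ := wordLength_mul_le hSgen _ _
      _ ≤ 2 * b₀ := by omega
  have main : ∀ k : ℕ, ∀ h : ↥H, ‖tPart (h : IsomE n)‖ ≤ k + R + 1 →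
      wordLength S h ≤ 2 * b₀ * (k + 1) := by
    intro k
    induction k with
    | zero =>
      intro h hnorm
      have := hsmall h (by push_cast at hnorm; linarith)
      simpa using this
    | succ k ih =>
      intro h hnorm
      by_cases hcase : ‖tPart (h : IsomE n)‖ ≤ k + R + 1
      · calc wordLength S h ≤ 2 * b₀ * (k+1) := ih h hcase
          _ ≤ 2 * b₀ * (k+1+1) := by nlinarith
      push_neg at hcase
      push_cast at hnorm
      set v : En n := tPart (h : IsomE n) with hv
      have hk0 : (0:ℝ) ≤ (k:ℝ) := Nat.cast_nonneg k
      have hvbig : R + 1 ≤ ‖v‖ := by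
        have : ((k:ℝ) + R + 1) < ‖v‖ := hcase
        linarith
      have hvpos : (0:ℝ) < ‖v‖ := by linarith
      set x : En n := (1 - (R+1)/‖v‖) • v with hx
      have hcoef : 0 ≤ 1 - (R+1)/‖v‖ := by
        rw [sub_nonneg, div_le_one hvpos]
        exact hvbig
      have hxnorm : ‖x‖ = ‖v‖ - (R+1) := by
        rw [hx, norm_smul, Real.norm_eq_abs, abs_of_nonneg hcoef]
        field_simp
      have hvx : ‖v - x‖ = R + 1 := by
        have : v - x = ((R+1)/‖v‖) • v := by
          rw [hx, sub_smul, one_smul]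
          abel
        rw [this, norm_smul, Real.norm_eq_abs, abs_of_nonneg (by positivity)]
        field_simp
      obtain ⟨lam, hlamH, hlam⟩ := hdense x
      set g : ↥H := ⟨SemidirectProduct.inl (Multiplicative.ofAdd lam), hlamH⟩ with hg
      have hglen : wordLength S g ≤ 2 * b₀ * (k+1) := by
        apply ih
        have : ‖tPart (g : IsomE n)‖ = ‖lam‖ := rfl
        rw [this]
        have : ‖lam‖ ≤ ‖x‖ + R := by
          have h0 := norm_sub_norm_le lam x
          have h2 : ‖lam - x‖ = ‖x - lam‖ := norm_sub_rev _ _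
          linarith [h2.le]
        rw [hxnorm] at this
        linarith
      have hrest : wordLength S (g⁻¹ * h) ≤ 2 * b₀ := by
        apply hsmall
        have htp : tPart ((g⁻¹ * h : ↥H) : IsomE n) = v - lam := by
          show tPart ((g : IsomE n)⁻¹ * (h : IsomE n)) = v - lam
          rw [tPart_mul]
          have h1 : tPart ((g : IsomE n)⁻¹) = -lam := by
            show Multiplicative.toAdd ((SemidirectProduct.inl
              (Multiplicative.ofAdd lam) : IsomE n)⁻¹).left = -lam
            rw [← map_inv]
            rfl
          have h2 : ((g : IsomE n)⁻¹).right = 1 := rfl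
          rw [h1, h2]
          show -lam + v = v - lam
          abel
        rw [htp]
        calc ‖v - lam‖ ≤ ‖v - x‖ + ‖x - lam‖ := by
              have : v - lam = (v - x) + (x - lam) := by abel
              rw [this]; exact norm_add_le _ _
          _ ≤ 2*R + 1 := by rw [hvx]; linarith
      calc wordLength S h = wordLength S (g * (g⁻¹ * h)) := by
            rw [mul_inv_cancel_left]
        _ ≤ wordLength S g + wordLength S (g⁻¹ * h) := wordLength_mul_le hSgen _ _
        _ ≤ 2 * b₀ * (k+1) + 2 * b₀ := by omega
        _ = 2 * b₀ * (k+1+1) := by ring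
  intro h
  apply main
  calc ‖tPart (h : IsomE n)‖ ≤ ⌈‖tPart (h : IsomE n)‖⌉₊ := Nat.le_ceil _
    _ ≤ ⌈‖tPart (h : IsomE n)‖⌉₊ + R + 1 := by linarith

lemma tPart_prod_bound {H : Subgroup (IsomE n)} (S : Set ↥H) (M : ℝ) (hM : 0 ≤ M)
    (hSM : ∀ s ∈ S, ‖tPart (s : IsomE n)‖ ≤ M) :
    ∀ l : List ↥H, (∀ x ∈ l, x ∈ S ∨ x⁻¹ ∈ S) →
      ‖tPart ((l.prod : ↥H) : IsomE n)‖ ≤ M * l.length := by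
  intro l
  induction l with
  | nil =>
    intro _
    show ‖tPart ((1 : IsomE n))‖ ≤ M * (0:ℕ)
    have : tPart (1 : IsomE n) = 0 := rfl
    rw [this]
    simp
  | cons a l ih =>
    intro hmem
    have ha : ‖tPart ((a : ↥H) : IsomE n)‖ ≤ M := by
      rcases hmem a List.mem_cons_self with h | h
      · exact hSM a h
      · have := hSM _ h
        have heq : ((a⁻¹ : ↥H) : IsomE n) = ((a : ↥H) : IsomE n)⁻¹ := rfl
        rw [heq, norm_tPart_inv] at this
        exact this
    have hl := ih (fun x hx => hmem x (List.mem_cons_of_mem a hx))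
    have hprod : ((List.prod (a :: l) : ↥H) : IsomE n)
        = ((a : ↥H) : IsomE n) * ((l.prod : ↥H) : IsomE n) := by
      rw [List.prod_cons]
      rfl
    rw [hprod, tPart_mul]
    calc ‖tPart ((a:↥H):IsomE n) + ((a:↥H):IsomE n).right (tPart ((l.prod:↥H):IsomE n))‖
        ≤ ‖tPart ((a:↥H):IsomE n)‖ + ‖((a:↥H):IsomE n).right (tPart ((l.prod:↥H):IsomE n))‖ :=
          norm_add_le _ _
      _ = ‖tPart ((a:↥H):IsomE n)‖ + ‖tPart ((l.prod:↥H):IsomE n)‖ := by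
          rw [LinearIsometryEquiv.norm_map]
      _ ≤ M + M * l.length := add_le_add ha hl
      _ = M * (a :: l).length := by
          rw [List.length_cons]
          push_cast
          ring

end chain

set_option maxHeartbeats 1000000 in
/-- **The conjugator length function of every split crystallographic group grows linearly.**
A crystallographic group is a discrete cocompact subgroup of `Isom(𝔼ⁿ)`; it is split if
`H = T_H ⋊ H₀`.  For any finite generating set `S` of `H`, `CLF S m ≤ C·m + D`. -/
theorem conjugator_length_of_split_crystallographic_linear (n : ℕ)
    (H : Subgroup (IsomE n)) (hsplit : Splits H)
    (hdisc : DiscreteTopology ↥H)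
    (hcocpt : ∃ K : Set (En n), IsCompact K ∧ ∀ x : En n, ∃ h ∈ H, ∃ y ∈ K, isomAct h y = x)
    (S : Set ↥H) (hSfin : S.Finite) (hSgen : Subgroup.closure S = ⊤) :
    ∃ C D : ℕ, 0 < C ∧ ∀ m : ℕ, CLF S m ≤ C * m + D := by
  classical
  -- extract a density radius R ≥ 0
  obtain ⟨K, hKcpt, hKcov⟩ := hcocpt
  obtain ⟨r, hKr⟩ := hKcpt.isBounded.subset_closedBall 0
  set R : ℝ := max r 0 with hRdef
  have hR0 : 0 ≤ R := le_max_right _ _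
  have hdense : ∀ x : En n, ∃ v : En n,
      (SemidirectProduct.inl (Multiplicative.ofAdd v) ∈ H) ∧ ‖x - v‖ ≤ R := by
    intro x
    obtain ⟨h, hh, y, hy, hxy⟩ := hKcov x
    refine ⟨tPart h, ?_, ?_⟩
    · have := (hsplit h hh).1
      have heq : Multiplicative.ofAdd (tPart h) = h.left := rfl
      rwa [heq]
    · have h1 : h.right y + tPart h = x := hxy
      have h2 : x - tPart h = h.right y := by rw [← h1]; abel
      rw [h2, LinearIsometryEquiv.norm_map]
      have : y ∈ Metric.closedBall (0 : En n) r := hKr hy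
      rw [Metric.mem_closedBall, dist_zero_right] at this
      exact le_trans this (le_max_left _ _)
  set L : AddSubgroup (En n) := LHsub H with hLdef
  have hdenseL : ∀ x : En n, ∃ v ∈ L, ‖x - v‖ ≤ R := fun x => by
    obtain ⟨v, hv1, hv2⟩ := hdense x
    exact ⟨v, hv1, hv2⟩
  have hLd : DiscreteTopology ↥L := discrete_LH H hdisc
  -- the finite spanning set T
  set T : Set (En n) := (L : Set (En n)) ∩ Metric.closedBall 0 (2*R+1) with hTdef
  have hTfin : T.Finite := finite_ball_inter L hLd (2*R+1)
  have hTspan : Submodule.span ℝ T = ⊤ := mem_span_ball hR0 hdenseL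
  have hTinv : ∀ A ∈ PtSub H, ∀ v ∈ T, A v ∈ T := by
    intro A hA v hv
    obtain ⟨hv1, hv2⟩ := hv
    constructor
    · exact lattice_inv H hA hv1
    · rw [Metric.mem_closedBall, dist_zero_right] at hv2 ⊢
      rwa [LinearIsometryEquiv.norm_map]
  have hPtfin : Finite ↥(PtSub H) := pt_finite H hTfin hTspan hTinv
  set N : ℕ := Nat.card ↥(PtSub H) with hNdef
  have hN : 0 < N := by
    haveI := hPtfin
    haveI : Nonempty ↥(PtSub H) := ⟨1⟩
    exact Nat.card_pos
  -- the finite set of "small" elements and the bound b₀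
  have hG1 : {g : ↥H | tPart (g : IsomE n) = 0}.Finite := by
    have himg : (fun g : ↥H => (g : IsomE n).right) '' {g : ↥H | tPart (g : IsomE n) = 0}
        ⊆ (PtSub H : Set (OrthGrp n)) := by
      rintro A ⟨g, hg, rfl⟩
      exact (hsplit _ g.2).2
    have hPtset : (PtSub H : Set (OrthGrp n)).Finite := by
      haveI := hPtfin
      exact Set.toFinite _
    apply Set.Finite.of_finite_image (hPtset.subset himg)
    intro g hg g' hg' hrr
    apply Subtype.ext
    apply isom_ext
    · rw [hg, hg']
    · exact hrr
  have hG2 : {g : ↥H | (g : IsomE n).right = 1 ∧ ‖tPart (g : IsomE n)‖ ≤ 2*R+1}.Finite := by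
    have himg : (fun g : ↥H => tPart (g : IsomE n)) ''
        {g : ↥H | (g : IsomE n).right = 1 ∧ ‖tPart (g : IsomE n)‖ ≤ 2*R+1} ⊆ T := by
      rintro v ⟨g, ⟨hg1, hg2⟩, rfl⟩
      constructor
      · show SemidirectProduct.inl (Multiplicative.ofAdd (tPart (g : IsomE n))) ∈ H
        have : SemidirectProduct.inl (Multiplicative.ofAdd (tPart (g : IsomE n)))
            = (g : IsomE n) := by
          apply isom_ext
          · rfl
          · rw [hg1]; rfl
        rw [this]
        exact g.2
      · rw [Metric.mem_closedBall, dist_zero_right]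
        exact hg2
    apply Set.Finite.of_finite_image (hTfin.subset himg)
    intro g hg g' hg' htt
    apply Subtype.ext
    apply isom_ext
    · exact htt
    · rw [hg.1, hg'.1]
  obtain ⟨b₀, hb₀⟩ := ((hG1.union hG2).image (wordLength S)).bddAbove
  have hb1 : ∀ g : ↥H, (g : IsomE n).right = 1 → ‖tPart (g : IsomE n)‖ ≤ 2*R+1 →
      wordLength S g ≤ b₀ := by
    intro g p q
    exact hb₀ (Set.mem_image_of_mem _ (Set.mem_union_right _ ⟨p, q⟩))
  have hb2 : ∀ g : ↥H, tPart (g : IsomE n) = 0 → wordLength S g ≤ b₀ := by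
    intro g p
    exact hb₀ (Set.mem_image_of_mem _ (Set.mem_union_left _ p))
  -- the bound M on translation parts of generators
  obtain ⟨M₀, hM₀⟩ := (hSfin.image (fun s : ↥H => ‖tPart (s : IsomE n)‖)).bddAbove
  set M : ℝ := max M₀ 0 with hMdef
  have hM0 : 0 ≤ M := le_max_right _ _
  have hSM : ∀ s ∈ S, ‖tPart (s : IsomE n)‖ ≤ M := fun s hs =>
    le_trans (hM₀ (Set.mem_image_of_mem _ hs)) (le_max_left _ _)
  have hlenbound : ∀ g : ↥H, ‖tPart (g : IsomE n)‖ ≤ M * wordLength S g := by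
    intro g
    obtain ⟨lw, hl1, hl2, hl3⟩ := wordLength_witness hSgen g
    have := tPart_prod_bound S M hM0 hSM lw hl1
    rw [hl2, hl3] at this
    exact this
  -- the constants
  refine ⟨2 * b₀ * ⌈(N:ℝ) * M⌉₊ + 1, 2 * b₀ * (⌈(N:ℝ) * R⌉₊ + 1), Nat.succ_pos _, ?_⟩
  intro m
  apply csSup_le'
  rintro l ⟨h, h', hconj, hlen, rfl⟩
  -- extract the conjugator
  obtain ⟨c0, hconj'⟩ := isConj_iff.1 hconj
  have hcoe : (c0 : IsomE n) * (h : IsomE n) * (c0 : IsomE n)⁻¹ = (h' : IsomE n) := by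
    have := congrArg (Subtype.val) hconj'
    push_cast at this
    exact this
  obtain ⟨heqn, hrot⟩ := (conj_iff _ _ _).1 hcoe
  set v : En n := tPart (h : IsomE n) with hvdef
  set v' : En n := tPart (h' : IsomE n) with hv'def
  set B : OrthGrp n := (c0 : IsomE n).right with hBdef
  set A' : OrthGrp n := (h' : IsomE n).right with hA'def
  set c : En n := v' - B v with hcdef
  have hw0 : tPart (c0 : IsomE n) ∈ L := by
    have := (hsplit _ c0.2).1
    have heq : Multiplicative.ofAdd (tPart (c0 : IsomE n)) = (c0 : IsomE n).left := rfl
    show SemidirectProduct.inl (Multiplicative.ofAdd (tPart (c0 : IsomE n))) ∈ H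
    rwa [heq]
  have hsolve0 : tPart (c0 : IsomE n) - A' (tPart (c0 : IsomE n)) = c := by
    rw [hcdef, sub_eq_sub_iff_add_eq_add]
    exact heqn
  have hA'Pt : A' ∈ PtSub H := (hsplit _ h'.2).2
  have hLinv : ∀ u ∈ L, A' u ∈ L := by
    intro u hu
    exact lattice_inv H hA'Pt hu
  obtain ⟨w₂, hw₂L, hw₂eq, hw₂norm⟩ :=
    key_solve hN A' (pt_pow_eq_one H hPtfin hA'Pt) L hLinv R hdenseL hw0 hsolve0
  set k₂ : IsomE n := SemidirectProduct.inl (Multiplicative.ofAdd w₂) *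
    SemidirectProduct.inr B with hk₂def
  have hk₂H : k₂ ∈ H := H.mul_mem hw₂L ((hsplit _ c0.2).2)
  set k₂H : ↥H := ⟨k₂, hk₂H⟩ with hk₂Hdef
  have hk₂right : k₂.right = B := inl_mul_inr_right w₂ B
  have hk₂t : tPart k₂ = w₂ := by
    show Multiplicative.toAdd k₂.left = w₂
    rw [hk₂def, inl_mul_inr_left]
    rfl
  have hconj₂ : k₂H * h * k₂H⁻¹ = h' := by
    apply Subtype.ext
    push_cast
    apply (conj_iff _ _ _).2
    constructor
    · rw [hk₂t, hk₂right]
      rw [← sub_eq_sub_iff_add_eq_add]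
      exact hw₂eq
    · rw [hk₂right]
      exact hrot
  have hcl : conjLength S h h' ≤ wordLength S k₂H := Nat.sInf_le ⟨k₂H, hconj₂, rfl⟩
  have hwb := word_bound H hsplit S hSgen R hR0 hdense b₀ hb1 hb2 k₂H
  -- numerical estimates
  have hvm : ‖v‖ ≤ M * (wordLength S h) := hlenbound h
  have hv'm : ‖v'‖ ≤ M * (wordLength S h') := hlenbound h'
  have hmm : ((wordLength S h : ℝ) + (wordLength S h' : ℝ)) ≤ (m : ℝ) := by
    exact_mod_cast hlen
  have hcnorm : ‖c‖ ≤ M * m := by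
    calc ‖c‖ ≤ ‖v'‖ + ‖B v‖ := norm_sub_le _ _
      _ = ‖v'‖ + ‖v‖ := by rw [LinearIsometryEquiv.norm_map]
      _ ≤ M * (wordLength S h') + M * (wordLength S h) := add_le_add hv'm hvm
      _ ≤ M * m := by nlinarith
  have hNnn : (0:ℝ) ≤ (N:ℝ) := Nat.cast_nonneg N
  have hw₂m : ‖w₂‖ ≤ (N:ℝ) * M * (m:ℝ) + (N:ℝ) * R := by
    have : (N:ℝ) * ‖c‖ ≤ (N:ℝ) * (M * m) := mul_le_mul_of_nonneg_left hcnorm hNnn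
    calc ‖w₂‖ ≤ (N:ℝ) * ‖c‖ + (N:ℝ) * R := hw₂norm
      _ ≤ (N:ℝ) * M * (m:ℝ) + (N:ℝ) * R := by nlinarith
  have hceil : ⌈‖w₂‖⌉₊ ≤ ⌈(N:ℝ) * M⌉₊ * m + ⌈(N:ℝ) * R⌉₊ := by
    apply Nat.ceil_le.2
    push_cast
    have h1 := Nat.le_ceil ((N:ℝ) * M)
    have h2 := Nat.le_ceil ((N:ℝ) * R)
    have hm0 : (0:ℝ) ≤ (m:ℝ) := Nat.cast_nonneg m
    calc ‖w₂‖ ≤ (N:ℝ) * M * (m:ℝ) + (N:ℝ) * R := hw₂m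
      _ ≤ (⌈(N:ℝ) * M⌉₊ : ℝ) * (m:ℝ) + (⌈(N:ℝ) * R⌉₊ : ℝ) :=
          add_le_add (mul_le_mul_of_nonneg_right h1 hm0) h2
  have htk : tPart ((k₂H : IsomE n)) = w₂ := hk₂t
  calc conjLength S h h' ≤ wordLength S k₂H := hcl
    _ ≤ 2 * b₀ * (⌈‖tPart ((k₂H : IsomE n))‖⌉₊ + 1) := hwb
    _ ≤ 2 * b₀ * (⌈(N:ℝ) * M⌉₊ * m + ⌈(N:ℝ) * R⌉₊ + 1) := by
        apply Nat.mul_le_mul_left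
        rw [htk]
        omega
    _ ≤ (2 * b₀ * ⌈(N:ℝ) * M⌉₊ + 1) * m + 2 * b₀ * (⌈(N:ℝ) * R⌉₊ + 1) := by
        nlinarith
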